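/- Let B be an l × n matrix over a field F that is a valid scalar linear index code for side-information graph G. If V' ⊆ [n] induces an acyclic subgraph of G, then the columns of B indexed by V' are linearly independent over F. -/

import Mathlib

def IsDiCycle {V : Type*} (A : V → V → Prop) (c : List V) : Prop :=
  c ≠ [] ∧ c.Nodup ∧ c.Chain' A ∧ ∀ x ∈ c.getLast?, ∀ y ∈ c.head?, A x y

lemma exists_source {n : ℕ} {Adj : Fin n → Fin n → Prop} {V' : Finset (Fin n)}
    (hacyc : ∀ c : List (Fin n), IsDiCycle Adj c → ∃ x ∈ c, x ∉ V')
    (T : Finset (Fin n)) (hTV : ∀ x ∈ T, x ∈ V') (hT : T.Nonempty) :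
    ∃ i ∈ T, ∀ j ∈ T, ¬ Adj j i := by
  classical
  by_contra h
  push_neg at h
  have h' : ∀ i : Fin n, ∃ j : Fin n, i ∈ T → j ∈ T ∧ Adj j i := by
    intro i
    by_cases hi : i ∈ T
    · obtain ⟨j, hj, ha⟩ := h i hi
      exact ⟨j, fun _ => ⟨hj, ha⟩⟩
    · exact ⟨i, fun hi' => absurd hi' hi⟩
  choose g hg using h'
  obtain ⟨i0, hi0⟩ := hT
  set seq : ℕ → Fin n := fun k => g^[k] i0 with hseq
  have hmem : ∀ k, seq k ∈ T := by
    intro k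
    induction k with
    | zero => exact hi0
    | succ k ih =>
      have : seq (k+1) = g (seq k) := Function.iterate_succ_apply' g k i0
      rw [this]
      exact (hg (seq k) ih).1
  have hadj : ∀ k, Adj (seq (k+1)) (seq k) := by
    intro k
    have : seq (k+1) = g (seq k) := Function.iterate_succ_apply' g k i0
    rw [this]
    exact (hg (seq k) (hmem k)).2
  have hP : ∃ m, ∃ k, k < m ∧ seq k = seq m := by
    obtain ⟨a, b, hne, heq⟩ := Finite.exists_ne_map_eq_of_infinite seq
    rcases hne.lt_or_gt with h1 | h1
    · exact ⟨b, a, h1, heq⟩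
    · exact ⟨a, b, h1, heq.symm⟩
  set b0 := Nat.find hP with hb0
  obtain ⟨a0, ha0, heq0⟩ := Nat.find_spec hP
  have hinj : ∀ x y, x < b0 → y < b0 → seq x = seq y → x = y := by
    intro x y hx hy hxy
    rcases lt_trichotomy x y with h1 | h1 | h1
    · exact absurd ⟨x, h1, hxy⟩ (Nat.find_min hP hy)
    · exact h1
    · exact absurd ⟨y, h1, hxy.symm⟩ (Nat.find_min hP hx)
  set L := b0 - a0 with hL
  have hL1 : 1 ≤ L := by omega
  set c : List (Fin n) := (List.range L).map (fun m => seq (b0 - 1 - m)) with hc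
  have hcyc : IsDiCycle Adj c := by
    refine ⟨?_, ?_, ?_, ?_⟩
    · simp [hc]
      omega
    · refine List.Nodup.map_on ?_ (List.nodup_range (n := L))
      intro x hx y hy hxy
      rw [List.mem_range] at hx hy
      have := hinj (b0 - 1 - x) (b0 - 1 - y) (by omega) (by omega) hxy
      omega
    · rw [hc, List.Chain', List.isChain_map, show L = (L-1)+1 from by omega, List.isChain_range_succ]
      intro m hm
      have e1 : b0 - 1 - m = (b0 - 1 - (m+1)) + 1 := by omega
      rw [e1]
      exact hadj _
    · intro x hx y hy
      have hlast : c.getLast? = some (seq a0) := by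
        rw [List.getLast?_eq_getElem?]
        have hlen : c.length = L := by simp [hc]
        rw [hlen, hc, List.getElem?_map, List.getElem?_range (by omega : L - 1 < L)]
        simp only [Option.map_some]
        congr 2
        omega
      have hhead : c.head? = some (seq (b0 - 1)) := by
        rw [List.head?_eq_getElem?]
        rw [hc, List.getElem?_map, List.getElem?_range (by omega : 0 < L)]
        simp
      rw [hlast] at hx
      rw [hhead] at hy
      simp only [Option.mem_some_iff] at hx hy
      subst hx hy
      have h2 := hadj (b0 - 1)
      rwa [show b0 - 1 + 1 = b0 from by omega, ← heq0] at h2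
  obtain ⟨x, hxc, hxV⟩ := hacyc c hcyc
  apply hxV
  rw [hc, List.mem_map] at hxc
  obtain ⟨m, _, rfl⟩ := hxc
  exact hTV _ (hmem _)

/-- `B` is a valid scalar linear index code for the side-information graph with
adjacency `Adj` (edge `(j,i)` means receiver `i` knows `x_j`): for each `i`, the
column `b_i` is not in the span of the columns `b_j` with `j ∉ S(i) ∪ {i}`. -/
def ValidIndexCode {F : Type*} [Field F] {l n : ℕ}
    (B : Matrix (Fin l) (Fin n) F) (Adj : Fin n → Fin n → Prop) : Prop :=
  ∀ i : Fin n, B.transpose i ∉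
    Submodule.span F (B.transpose '' {j | ¬ Adj j i ∧ j ≠ i})

/-- If `B` is a valid scalar linear index code for side-information graph `G` and the
vertex set `V'` induces an acyclic subgraph of `G`, then the columns of `B` indexed
by `V'` are linearly independent. -/
theorem columns_indep_on_acyclic_set {F : Type*} [Field F] {l n : ℕ}
    (B : Matrix (Fin l) (Fin n) F) (Adj : Fin n → Fin n → Prop)
    (hB : ValidIndexCode B Adj) (V' : Finset (Fin n))
    (hacyc : ∀ c : List (Fin n), IsDiCycle Adj c → ∃ x ∈ c, x ∉ V') :
    LinearIndependent F (fun i : V' => B.transpose i.1) := by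
  classical
  have key : ∀ f ∈ Finsupp.supported F F (V' : Set (Fin n)),
      Finsupp.linearCombination F B.transpose f = 0 → f = 0 := by
    intro f hf hf0
    by_contra hne
    have hTne : f.support.Nonempty := Finsupp.support_nonempty_iff.mpr hne
    obtain ⟨i, hiT, hsrc⟩ := exists_source hacyc f.support
      (fun x hx => Finset.mem_coe.mp (hf hx)) hTne
    apply hB i
    have hsum : (f.support.sum fun j => f j • B.transpose j) = 0 := by
      have hf0 := (Finsupp.linearCombination_apply F f).symm.trans hf0
      exact hf0
    rw [← Finset.add_sum_erase _ _ hiT] at hsum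
    have hfi : f i ≠ 0 := Finsupp.mem_support_iff.mp hiT
    have h1 : f i • B.transpose i = - ∑ j ∈ f.support.erase i, f j • B.transpose j :=
      eq_neg_of_add_eq_zero_left hsum
    have hBi : B.transpose i
        = (f i)⁻¹ • (- ∑ j ∈ f.support.erase i, f j • B.transpose j) := by
      rw [← h1, smul_smul, inv_mul_cancel₀ hfi, one_smul]
    rw [hBi]
    apply Submodule.smul_mem
    apply Submodule.neg_mem
    apply Submodule.sum_mem
    intro j hj
    apply Submodule.smul_mem
    apply Submodule.subset_span
    exact ⟨j, ⟨hsrc j (Finset.mem_of_mem_erase hj), Finset.ne_of_mem_erase hj⟩, rfl⟩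
  exact linearIndepOn_iff.mpr key
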